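/- Let G be a countable abelian group acting ergodically and measure-preservingly on a probability space X, and let φ, ψ: X → S¹ be phase polynomials of degree < k such that φ/ψ is not a.e. constant. Then ‖φ − ψ‖_{L²(X)} ≥ √2 / 2^{k−2}. -/

import Mathlib

open MeasureTheory

/-- The multiplicative derivative of `φ` with respect to a transformation `S`. -/
noncomputable def mulDeriv {X U : Type*} [Group U] (S : X → X) (φ : X → U) : X → U :=
  fun x => φ (S x) * (φ x)⁻¹

section Aux

lemma mulDeriv_div {X U : Type*} [CommGroup U] (S : X → X) (φ ψ : X → U) :
    mulDeriv S (fun x => φ x * (ψ x)⁻¹) =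
      fun x => mulDeriv S φ x * (mulDeriv S ψ x)⁻¹ := by
  funext x
  simp only [mulDeriv, mul_inv, inv_inv]
  simp [mul_comm, mul_left_comm, mul_assoc]

lemma foldr_mulDeriv_div {X U : Type*} [CommGroup U] (L : List (X → X)) (φ ψ : X → U) :
    L.foldr mulDeriv (fun x => φ x * (ψ x)⁻¹) =
      fun x => (L.foldr mulDeriv φ) x * ((L.foldr mulDeriv ψ) x)⁻¹ := by
  induction L with
  | nil => rfl
  | cons S L ih =>
      simp only [List.foldr_cons, ih]
      exact mulDeriv_div S _ _

lemma circle_norm_div_sub_one (a b : Circle) :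
    ‖(a : ℂ) * (b : ℂ)⁻¹ - 1‖ = ‖(a : ℂ) - (b : ℂ)‖ := by
  have hb : (b : ℂ) ≠ 0 := Circle.coe_ne_zero b
  have h : (a : ℂ) * (b : ℂ)⁻¹ - 1 = ((a : ℂ) - b) * (b : ℂ)⁻¹ := by
    field_simp
  rw [h, norm_mul, norm_inv]
  rw [Circle.norm_coe, inv_one, mul_one]

variable {G X : Type*} [AddCommGroup G] [Countable G] [MeasurableSpace X]

/-- A measurable invariant circle-valued function is a.e. constant. -/
lemma exists_const_of_invariant
    (μ : Measure X) [IsProbabilityMeasure μ] (T : G → X → X)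
    (herg : ∀ f : X → ℂ, Measurable f → (∀ g : G, ∀ᵐ x ∂μ, f (T g x) = f x) →
      ∃ c : ℂ, ∀ᵐ x ∂μ, f x = c)
    (χ : X → Circle) (hχm : Measurable fun x => (χ x : ℂ))
    (hinv : ∀ g : G, ∀ᵐ x ∂μ, χ (T g x) = χ x) :
    ∃ c : Circle, ∀ᵐ x ∂μ, χ x = c := by
  obtain ⟨c, hc⟩ := herg _ hχm (fun g => (hinv g).mono fun x hx => by rw [hx])
  obtain ⟨x₀, hx₀⟩ := hc.exists
  exact ⟨χ x₀, hc.mono fun y hy => Circle.coe_injective (by rw [hy, hx₀])⟩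

/-- The L² norm of `χ - 1` for a circle-valued `χ` with zero integral is `√2`. -/
lemma eLpNorm_sub_one_of_integral_zero
    (μ : Measure X) [IsProbabilityMeasure μ]
    (χ : X → Circle) (hχm : Measurable fun x => (χ x : ℂ))
    (hI : ∫ x, (χ x : ℂ) ∂μ = 0) :
    eLpNorm (fun x => (χ x : ℂ) - 1) 2 μ = ENNReal.ofReal (Real.sqrt 2) := by
  set f : X → ℂ := fun x => (χ x : ℂ) with hf
  have hfm : Measurable f := hχm
  have hfint : Integrable f μ := by
    refine (integrable_const (1 : ℝ)).mono' hfm.aestronglyMeasurable ?_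
    exact ae_of_all _ fun x => by simp [hf, Circle.norm_coe]
  have hnorm : ∀ x, ‖f x - 1‖ ^ 2 = 2 - 2 * (f x).re := by
    intro x
    have h2 : Complex.normSq (f x) = 1 := Circle.normSq_coe _
    have h3 : Complex.normSq (f x - 1) = Complex.normSq (f x) - 2 * (f x).re + 1 := by
      simp only [Complex.normSq_apply, Complex.sub_re, Complex.sub_im, Complex.one_re,
        Complex.one_im]
      ring
    rw [Complex.sq_norm, h3, h2]
    ring
  have hint2 : ∫ x, ‖f x - 1‖ ^ 2 ∂μ = 2 := by
    rw [integral_congr_ae (ae_of_all _ hnorm)]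
    have hintre : Integrable (fun x => (f x).re) μ := hfint.re
    have hre : ∫ x, (f x).re ∂μ = 0 := by
      have h := Complex.reCLM.integral_comp_comm hfint
      simp only [Complex.reCLM_apply] at h
      rw [h, hI]
      simp
    rw [integral_sub (integrable_const 2) (hintre.const_mul 2), integral_const,
      integral_const_mul, hre]
    simp
  have hint2' : Integrable (fun x => ‖f x - 1‖ ^ 2) μ := by
    refine (integrable_const (4 : ℝ)).mono'
      (((hfm.sub measurable_const).norm.pow_const 2).aestronglyMeasurable) ?_
    refine ae_of_all _ fun x => ?_
    have h1 : ‖f x‖ = 1 := by simp [hf, Circle.norm_coe]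
    have h2 : ‖f x - 1‖ ≤ 2 := by
      calc ‖f x - 1‖ ≤ ‖f x‖ + ‖(1 : ℂ)‖ := norm_sub_le _ _
      _ = 2 := by rw [h1]; norm_num
    calc ‖‖f x - 1‖ ^ 2‖ = ‖f x - 1‖ ^ 2 := by
          rw [Real.norm_of_nonneg (by positivity)]
      _ ≤ 2 ^ 2 := by gcongr
      _ = 4 := by norm_num
  have hlint : ∫⁻ x, (‖f x - 1‖₊ : ENNReal) ^ (2 : ℝ) ∂μ = ENNReal.ofReal 2 := by
    have heq : ∀ x, (‖f x - 1‖₊ : ENNReal) ^ (2 : ℝ) = ENNReal.ofReal (‖f x - 1‖ ^ 2) := by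
      intro x
      rw [← enorm_eq_nnnorm, ← ofReal_norm,
        ENNReal.ofReal_rpow_of_nonneg (norm_nonneg _) (by norm_num : (0:ℝ) ≤ 2)]
      congr 1
      rw [← Real.rpow_natCast ‖f x - 1‖ 2]
      norm_num
    simp_rw [heq]
    rw [← ofReal_integral_eq_lintegral_ofReal hint2' (ae_of_all _ fun x => by positivity),
      hint2]
  rw [eLpNorm_eq_lintegral_rpow_enorm_toReal (by norm_num) (by norm_num)]
  simp only [ENNReal.toReal_ofNat, enorm_eq_nnnorm]
  rw [hlint, ENNReal.ofReal_rpow_of_pos (by norm_num : (0:ℝ) < 2)]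
  congr 1
  rw [Real.sqrt_eq_rpow]

variable [MeasurableSpace Circle] [BorelSpace Circle]

/-- Key induction: a nonconstant phase polynomial of degree `< k` is far from `1`. -/
lemma phasePoly_key
    (μ : Measure X) [IsProbabilityMeasure μ]
    (T : G → X → X) (hmp : ∀ g : G, MeasurePreserving (T g) μ μ)
    (herg : ∀ f : X → ℂ, Measurable f → (∀ g : G, ∀ᵐ x ∂μ, f (T g x) = f x) →
      ∃ c : ℂ, ∀ᵐ x ∂μ, f x = c) :
    ∀ k : ℕ, 1 ≤ k → ∀ χ : X → Circle, Measurable (fun x => (χ x : ℂ)) →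
      (∀ l : List G, l.length = k → ∀ᵐ x ∂μ, ((l.map T).foldr mulDeriv χ) x = 1) →
      (¬ ∃ c : Circle, ∀ᵐ x ∂μ, χ x = c) →
      ENNReal.ofReal (Real.sqrt 2 / (2 : ℝ) ^ ((k : ℤ) - 2)) ≤
        eLpNorm (fun x => (χ x : ℂ) - 1) 2 μ := by
  intro k hk
  induction k, hk using Nat.le_induction with
  | base =>
      intro χ hχm hχpoly hnc
      exfalso
      apply hnc
      refine exists_const_of_invariant μ T herg χ hχm fun g => ?_
      have h := hχpoly [g] rfl
      refine h.mono fun x hx => ?_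
      simpa only [List.map_cons, List.map_nil, List.foldr_cons, List.foldr_nil,
        mulDeriv, mul_inv_eq_one] using hx
  | succ k hk ih =>
      intro χ hχm hχpoly hnc
      by_cases hcase : ∀ g : G, ∃ c : Circle, ∀ᵐ x ∂μ, mulDeriv (T g) χ x = c
      · -- All derivatives are constant: in fact `∫ χ = 0` and the norm is `√2`.
        have hex : ∃ (g : G) (c : Circle), c ≠ 1 ∧ ∀ᵐ x ∂μ, mulDeriv (T g) χ x = c := by
          by_contra h
          push_neg at h
          apply hnc
          refine exists_const_of_invariant μ T herg χ hχm fun g => ?_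
          obtain ⟨c, hc⟩ := hcase g
          have hc1 : c = 1 := by
            by_contra hne
            exact h g c hne (hc.mono fun x hx => fun h' => h' hx)
          subst hc1
          refine hc.mono fun x hx => ?_
          simpa only [mulDeriv, mul_inv_eq_one] using hx
        obtain ⟨g, c, hc1, hc⟩ := hex
        have hc1' : (c : ℂ) ≠ 1 := fun h => hc1 (Circle.coe_injective (by simpa using h))
        -- the integral of χ vanishes
        have hI : ∫ x, (χ x : ℂ) ∂μ = 0 := by
          have h1 : ∫ x, (χ (T g x) : ℂ) ∂μ = ∫ x, (χ x : ℂ) ∂μ := by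
            conv_rhs => rw [← (hmp g).map_eq]
            rw [integral_map (hmp g).measurable.aemeasurable hχm.aestronglyMeasurable]
          have h2 : ∫ x, (χ (T g x) : ℂ) ∂μ = (c : ℂ) * ∫ x, (χ x : ℂ) ∂μ := by
            rw [← integral_const_mul]
            refine integral_congr_ae (hc.mono fun x hx => ?_)
            simp only [mulDeriv] at hx
            have hx' : χ (T g x) = c * χ x := mul_inv_eq_iff_eq_mul.mp hx
            show (χ (T g x) : ℂ) = (c : ℂ) * (χ x : ℂ)
            rw [hx']
            push_cast
            ring
          have h3 : ((c : ℂ) - 1) * ∫ x, (χ x : ℂ) ∂μ = 0 := by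
            rw [sub_mul, ← h2, h1]
            ring
          rcases mul_eq_zero.mp h3 with h | h
          · exact absurd (by linear_combination h) hc1'
          · exact h
        rw [eLpNorm_sub_one_of_integral_zero μ χ hχm hI]
        apply ENNReal.ofReal_le_ofReal
        apply div_le_self (Real.sqrt_nonneg 2)
        exact one_le_zpow₀ (by norm_num) (by push_cast; omega)
      · -- Some derivative is nonconstant: apply the induction hypothesis to it.
        rw [not_forall] at hcase
        obtain ⟨g, hg⟩ := hcase
        set χ' : X → Circle := mulDeriv (T g) χ with hχ'
        have hχ'm : Measurable (fun x => (χ' x : ℂ)) := by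
          have : (fun x => (χ' x : ℂ)) = fun x => (χ (T g x) : ℂ) * ((χ x : ℂ))⁻¹ := by
            funext x; simp [hχ', mulDeriv]
          rw [this]
          exact (hχm.comp (hmp g).measurable).mul hχm.inv
        have hχ'poly : ∀ l : List G, l.length = k →
            ∀ᵐ x ∂μ, ((l.map T).foldr mulDeriv χ') x = 1 := by
          intro l hl
          have h := hχpoly (l ++ [g]) (by simp [hl])
          refine h.mono fun x hx => ?_
          have heq : ((l ++ [g]).map T).foldr mulDeriv χ = (l.map T).foldr mulDeriv χ' := by
            rw [List.map_append, List.foldr_append]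
            rfl
          rwa [heq] at hx
        have hihres := ih χ' hχ'm hχ'poly hg
        -- relate `‖χ' - 1‖` to `‖χ - 1‖`
        have hcongr : eLpNorm (fun x => (χ' x : ℂ) - 1) 2 μ =
            eLpNorm (fun x => (χ (T g x) : ℂ) - (χ x : ℂ)) 2 μ := by
          refine eLpNorm_congr_norm_ae (ae_of_all _ fun x => ?_)
          have : (χ' x : ℂ) = (χ (T g x) : ℂ) * ((χ x : ℂ))⁻¹ := by simp [hχ', mulDeriv]
          rw [this, circle_norm_div_sub_one]
        have hsplit : (fun x => (χ (T g x) : ℂ) - (χ x : ℂ)) =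
            ((fun y => (χ y : ℂ) - 1) ∘ T g) + (fun x => 1 - (χ x : ℂ)) := by
          funext x; simp only [Pi.add_apply, Function.comp_apply]; ring
        have htri : eLpNorm (fun x => (χ (T g x) : ℂ) - (χ x : ℂ)) 2 μ ≤
            eLpNorm ((fun y => (χ y : ℂ) - 1) ∘ T g) 2 μ +
              eLpNorm (fun x => 1 - (χ x : ℂ)) 2 μ := by
          rw [hsplit]
          exact eLpNorm_add_le
            (((hχm.sub measurable_const).comp (hmp g).measurable).aestronglyMeasurable)
            ((measurable_const.sub hχm).aestronglyMeasurable) one_le_two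
        have hcomp : eLpNorm ((fun y => (χ y : ℂ) - 1) ∘ T g) 2 μ =
            eLpNorm (fun x => (χ x : ℂ) - 1) 2 μ :=
          eLpNorm_comp_measurePreserving
            ((hχm.sub measurable_const).aestronglyMeasurable) (hmp g)
        have hswap : eLpNorm (fun x => 1 - (χ x : ℂ)) 2 μ =
            eLpNorm (fun x => (χ x : ℂ) - 1) 2 μ := by
          refine eLpNorm_congr_norm_ae (ae_of_all _ fun x => ?_)
          exact norm_sub_rev _ _
        have hchain : ENNReal.ofReal (Real.sqrt 2 / (2 : ℝ) ^ ((k : ℤ) - 2)) ≤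
            2 * eLpNorm (fun x => (χ x : ℂ) - 1) 2 μ := by
          refine hihres.trans ?_
          rw [hcongr]
          refine htri.trans ?_
          rw [hcomp, hswap, ← two_mul]
        have e1 : Real.sqrt 2 / (2 : ℝ) ^ ((k : ℤ) - 2) =
            2 * (Real.sqrt 2 / (2 : ℝ) ^ (((k + 1 : ℕ) : ℤ) - 2)) := by
          have h1 : (((k + 1 : ℕ)) : ℤ) - 2 = ((k : ℤ) - 2) + 1 := by push_cast; ring
          have hz : (2 : ℝ) ^ ((k : ℤ) - 2) ≠ 0 := zpow_ne_zero _ (by norm_num)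
          rw [h1, zpow_add_one₀ (by norm_num : (2 : ℝ) ≠ 0)]
          field_simp
        rw [e1, ENNReal.ofReal_mul (by norm_num : (0 : ℝ) ≤ 2)] at hchain
        have h2 : ENNReal.ofReal (2 : ℝ) = 2 := by norm_num
        rw [h2] at hchain
        exact (ENNReal.mul_le_mul_iff_right (by norm_num) (by norm_num)).mp hchain

end Aux

/-- Separation lemma: if `G` is a countable abelian group acting ergodically and
measure-preservingly on a probability space `X`, and `φ, ψ : X → S¹` are phase
polynomials of degree `< k` (with `k ≥ 1`) such that `φ/ψ` is not a.e. constant, then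
`‖φ − ψ‖_{L²(X)} ≥ √2 / 2^{k−2}`. -/
theorem phasePoly_separation
    [MeasurableSpace Circle] [BorelSpace Circle]
    {G X : Type*} [AddCommGroup G] [Countable G] [MeasurableSpace X]
    (μ : Measure X) [IsProbabilityMeasure μ]
    (T : G → X → X) (hmp : ∀ g : G, MeasurePreserving (T g) μ μ)
    (hT0 : T 0 = id) (hTadd : ∀ g h : G, T (g + h) = T g ∘ T h)
    (herg : ∀ f : X → ℂ, Measurable f → (∀ g : G, ∀ᵐ x ∂μ, f (T g x) = f x) →
      ∃ c : ℂ, ∀ᵐ x ∂μ, f x = c)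
    (k : ℕ) (hk : 1 ≤ k)
    (φ ψ : X → Circle) (hφmeas : Measurable φ) (hψmeas : Measurable ψ)
    (hφ : ∀ h : Fin k → G, ∀ᵐ x ∂μ, (((List.ofFn h).map T).foldr mulDeriv φ) x = 1)
    (hψ : ∀ h : Fin k → G, ∀ᵐ x ∂μ, (((List.ofFn h).map T).foldr mulDeriv ψ) x = 1)
    (hnc : ¬ ∃ c : Circle, ∀ᵐ x ∂μ, φ x * (ψ x)⁻¹ = c) :
    ENNReal.ofReal (Real.sqrt 2 / (2 : ℝ) ^ ((k : ℤ) - 2)) ≤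
      eLpNorm (fun x => (φ x : ℂ) - (ψ x : ℂ)) 2 μ := by
  have hcoe : Continuous (fun z : Circle => (z : ℂ)) := continuous_subtype_val
  have hφc : Measurable (fun x => (φ x : ℂ)) := hcoe.measurable.comp hφmeas
  have hψc : Measurable (fun x => (ψ x : ℂ)) := hcoe.measurable.comp hψmeas
  set χ : X → Circle := fun x => φ x * (ψ x)⁻¹ with hχ
  have hχm : Measurable (fun x => (χ x : ℂ)) := by
    have : (fun x => (χ x : ℂ)) = fun x => (φ x : ℂ) * ((ψ x : ℂ))⁻¹ := by
      funext x; simp [hχ]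
    rw [this]
    exact hφc.mul hψc.inv
  have hχpoly : ∀ l : List G, l.length = k →
      ∀ᵐ x ∂μ, ((l.map T).foldr mulDeriv χ) x = 1 := by
    intro l hl
    subst hl
    have h1 := hφ l.get
    have h2 := hψ l.get
    rw [List.ofFn_get] at h1 h2
    filter_upwards [h1, h2] with x hx1 hx2
    have := congrFun (foldr_mulDeriv_div (l.map T) φ ψ) x
    simp only [hχ]
    rw [this, hx1, hx2]
    simp
  have hkey := phasePoly_key μ T hmp herg k hk χ hχm hχpoly hnc
  have hcongr : eLpNorm (fun x => (χ x : ℂ) - 1) 2 μ =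
      eLpNorm (fun x => (φ x : ℂ) - (ψ x : ℂ)) 2 μ := by
    refine eLpNorm_congr_norm_ae (ae_of_all _ fun x => ?_)
    have : (χ x : ℂ) = (φ x : ℂ) * ((ψ x : ℂ))⁻¹ := by simp [hχ]
    rw [this, circle_norm_div_sub_one]
  rw [← hcongr]
  exact hkey
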